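/- Every perfect finite simple graph is ħ-perfect; that is, if G is a finite simple graph such that every induced subgraph H of G has chromatic number equal to clique number, then for every d ≥ 1, every realization S of G in dimension d, and every nonnegative weight vector w, β_S(w) = α(G,w). -/

import Mathlib

open Matrix

/-- A realization of the graph `G` in dimension `d`: a family of Hermitian involutions that
anticommute on edges and commute on non-edges. -/
def IsRealization {V : Type*} (G : SimpleGraph V) (d : ℕ)
    (S : V → Matrix (Fin d) (Fin d) ℂ) : Prop :=
  (∀ i, (S i).IsHermitian) ∧ (∀ i, S i * S i = 1) ∧
    (∀ i j, G.Adj i j → S i * S j = -(S j * S i)) ∧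
    (∀ i j, i ≠ j → ¬G.Adj i j → S i * S j = S j * S i)

/-- The (real) expectation value `ψᴴ A ψ` of a matrix `A` at a vector `ψ`. -/
noncomputable def expectation {d : ℕ} (A : Matrix (Fin d) (Fin d) ℂ) (ψ : Fin d → ℂ) : ℝ :=
  (star ψ ⬝ᵥ (A *ᵥ ψ)).re

/-- The beta value of a realization: supremum over unit vectors of the weighted sum of squared
expectations. -/
noncomputable def betaVal {V : Type*} [Fintype V] {d : ℕ}
    (S : V → Matrix (Fin d) (Fin d) ℂ) (w : V → ℝ) : ℝ :=
  sSup {r : ℝ | ∃ ψ : Fin d → ℂ, star ψ ⬝ᵥ ψ = 1 ∧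
    r = ∑ i, w i * (expectation (S i) ψ) ^ 2}

/-- A finite set of vertices is independent if no two of its members are adjacent. -/
def IsIndepSet {V : Type*} (G : SimpleGraph V) (I : Finset V) : Prop :=
  ∀ a ∈ I, ∀ b ∈ I, ¬G.Adj a b

/-- The weighted independence number. -/
noncomputable def alphaW {V : Type*} [Fintype V] (G : SimpleGraph V) (w : V → ℝ) : ℝ :=
  sSup {r : ℝ | ∃ I : Finset V, IsIndepSet G I ∧ r = ∑ i ∈ I, w i}

/-- A graph is ħ-perfect if for every realization and every nonnegative weight vector the beta
value equals the weighted independence number. -/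
def HbarPerfect {V : Type*} [Fintype V] (G : SimpleGraph V) : Prop :=
  ∀ d : ℕ, 1 ≤ d → ∀ S : V → Matrix (Fin d) (Fin d) ℂ, IsRealization G d S →
    ∀ w : V → ℝ, (∀ i, 0 ≤ w i) → betaVal S w = alphaW G w


namespace HbarAux
open Finset Matrix
set_option linter.unusedSectionVars false
set_option linter.unreachableTactic false
set_option linter.unusedTactic false
set_option maxHeartbeats 1000000
attribute [local instance] Classical.propDecidable

variable {V : Type*} [Fintype V]

/-- `K` is a clique in `Γ` (as a Finset predicate). -/
def clq (Γ : SimpleGraph V) (K : Finset V) : Prop := ∀ a ∈ K, ∀ b ∈ K, a ≠ b → Γ.Adj a b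

/-- maximum cardinality of a clique contained in `s`. -/
noncomputable def oms (Γ : SimpleGraph V) (s : Finset V) : ℕ :=
  (s.powerset.filter (clq Γ)).sup Finset.card

/-- maximum `w`-weight of a clique. -/
noncomputable def omW (Γ : SimpleGraph V) (w : V → ℕ) : ℕ :=
  ((univ : Finset V).powerset.filter (clq Γ)).sup (fun K => ∑ i ∈ K, w i)

/-- `s` admits a proper coloring with `oms Γ s` colors. -/
def GoodCol (Γ : SimpleGraph V) (s : Finset V) : Prop :=
  ∃ f : V → ℕ, (∀ v ∈ s, f v < oms Γ s) ∧ ∀ u ∈ s, ∀ v ∈ s, Γ.Adj u v → f u ≠ f v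

lemma clq_mono {Γ : SimpleGraph V} {K K' : Finset V} (h : K' ⊆ K) (hK : clq Γ K) : clq Γ K' :=
  fun a ha b hb hab => hK a (h ha) b (h hb) hab

lemma clq_empty (Γ : SimpleGraph V) : clq Γ ∅ := by simp [clq]

lemma clq_singleton (Γ : SimpleGraph V) (v : V) : clq Γ {v} := by
  intro a ha b hb hab
  simp only [mem_singleton] at ha hb
  subst ha; subst hb; exact absurd rfl hab

lemma card_le_oms {Γ : SimpleGraph V} {s K : Finset V} (hKs : K ⊆ s) (hK : clq Γ K) :
    K.card ≤ oms Γ s :=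
  le_sup (by simp [mem_filter, mem_powerset, hKs, hK])

lemma oms_mono {Γ : SimpleGraph V} {s t : Finset V} (h : s ⊆ t) : oms Γ s ≤ oms Γ t := by
  apply Finset.sup_le
  intro K hK
  simp only [mem_filter, mem_powerset] at hK
  exact card_le_oms (hK.1.trans h) hK.2

lemma exists_clique_oms (Γ : SimpleGraph V) (s : Finset V) :
    ∃ K, K ⊆ s ∧ clq Γ K ∧ K.card = oms Γ s := by
  have hne : (s.powerset.filter (clq Γ)).Nonempty :=
    ⟨∅, by simp [mem_filter, mem_powerset, clq_empty]⟩
  obtain ⟨K, hK, hval⟩ := Finset.exists_mem_eq_sup _ hne Finset.card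
  simp only [mem_filter, mem_powerset] at hK
  exact ⟨K, hK.1, hK.2, hval.symm⟩

lemma exists_clique_card_eq {Γ : SimpleGraph V} {s : Finset V} {m : ℕ} (hm : m ≤ oms Γ s) :
    ∃ K, K ⊆ s ∧ clq Γ K ∧ K.card = m := by
  obtain ⟨K, hKs, hK, hcard⟩ := exists_clique_oms Γ s
  obtain ⟨K', hK'K, hK'card⟩ := Finset.exists_subset_card_eq (s := K) (n := m) (by omega)
  exact ⟨K', hK'K.trans hKs, clq_mono hK'K hK, hK'card⟩

lemma wsum_le_omW {Γ : SimpleGraph V} {w : V → ℕ} {K : Finset V} (hK : clq Γ K) :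
    ∑ i ∈ K, w i ≤ omW Γ w :=
  Finset.le_sup (f := fun K => ∑ i ∈ K, w i) (by simp [mem_filter, mem_powerset, hK])

lemma exists_clique_omW (Γ : SimpleGraph V) (w : V → ℕ) :
    ∃ K, clq Γ K ∧ ∑ i ∈ K, w i = omW Γ w := by
  have hne : (((univ : Finset V)).powerset.filter (clq Γ)).Nonempty :=
    ⟨∅, by simp [mem_filter, mem_powerset, clq_empty]⟩
  obtain ⟨K, hK, hval⟩ := Finset.exists_mem_eq_sup _ hne (fun K => ∑ i ∈ K, w i)
  simp only [mem_filter, mem_powerset] at hK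
  exact ⟨K, hK.2, hval.symm⟩

lemma omW_mono {Γ : SimpleGraph V} {w w' : V → ℕ} (h : ∀ v, w v ≤ w' v) :
    omW Γ w ≤ omW Γ w' := by
  apply Finset.sup_le
  intro K hK
  simp only [mem_filter, mem_powerset] at hK
  exact (Finset.sum_le_sum fun i _ => h i).trans (wsum_le_omW hK.2)

lemma oms_nonempty_pos {Γ : SimpleGraph V} {s : Finset V} (h : s.Nonempty) : 1 ≤ oms Γ s := by
  obtain ⟨v, hv⟩ := h
  have := card_le_oms (K := {v}) (by simpa using hv) (clq_singleton Γ v)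
  simpa using this



lemma clique_inter_stable {Γ : SimpleGraph V} {K T : Finset V} (hK : clq Γ K)
    (hT : clq Γᶜ T) : (K ∩ T).card ≤ 1 := by
  by_contra h
  push_neg at h
  obtain ⟨a, ha, b, hb, hab⟩ := Finset.one_lt_card.mp h
  rw [mem_inter] at ha hb
  exact ((SimpleGraph.compl_adj Γ a b).mp (hT a ha.2 b hb.2 hab)).2 (hK a ha.1 b hb.1 hab)

lemma color_count {f : V → ℕ} {K : Finset V} {m : ℕ}
    (hinj : Set.InjOn f ↑K) (hlt : ∀ v ∈ K, f v < m) (hcard : K.card = m)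
    {j : ℕ} (hj : j < m) : (K.filter (fun v => f v = j)).card = 1 := by
  have himg : (K.image f).card = K.card := Finset.card_image_of_injOn hinj
  have hsub : K.image f ⊆ Finset.range m := by
    intro x hx
    obtain ⟨v, hv, rfl⟩ := Finset.mem_image.mp hx
    exact Finset.mem_range.mpr (hlt v hv)
  have heq : K.image f = Finset.range m :=
    Finset.eq_of_subset_of_card_le hsub (by rw [himg, hcard, Finset.card_range])
  have hjimg : j ∈ K.image f := heq ▸ Finset.mem_range.mpr hj
  obtain ⟨v, hv, hfv⟩ := Finset.mem_image.mp hjimg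
  rw [Finset.card_eq_one]
  refine ⟨v, ?_⟩
  ext x
  simp only [Finset.mem_filter, Finset.mem_singleton]
  constructor
  · rintro ⟨hx, hfx⟩
    exact hinj hx hv (by rw [hfx, hfv])
  · rintro rfl
    exact ⟨hv, hfv⟩

lemma color_missing {f : V → ℕ} {K : Finset V} {m : ℕ}
    (hinj : Set.InjOn f ↑K) (hlt : ∀ v ∈ K, f v < m) (hcard : K.card + 1 = m) :
    ∃ j₀ < m, (K.filter (fun v => f v = j₀)) = ∅ ∧
      ∀ j < m, j ≠ j₀ → (K.filter (fun v => f v = j)).card = 1 := by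
  have himg : (K.image f).card = K.card := Finset.card_image_of_injOn hinj
  have hsub : K.image f ⊆ Finset.range m := by
    intro x hx
    obtain ⟨v, hv, rfl⟩ := Finset.mem_image.mp hx
    exact Finset.mem_range.mpr (hlt v hv)
  have hdiff : (Finset.range m \ K.image f).card = 1 := by
    rw [Finset.card_sdiff_of_subset hsub, himg, Finset.card_range]; omega
  obtain ⟨j₀, hj₀⟩ := Finset.card_eq_one.mp hdiff
  have hj₀mem : j₀ ∈ Finset.range m \ K.image f := hj₀ ▸ Finset.mem_singleton_self j₀
  rw [Finset.mem_sdiff, Finset.mem_range] at hj₀mem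
  refine ⟨j₀, hj₀mem.1, ?_, ?_⟩
  · rw [Finset.filter_eq_empty_iff]
    intro v hv hfv
    exact hj₀mem.2 (Finset.mem_image.mpr ⟨v, hv, hfv⟩)
  · intro j hj hjj₀
    have hjimg : j ∈ K.image f := by
      by_contra hni
      have : j ∈ Finset.range m \ K.image f := Finset.mem_sdiff.mpr ⟨Finset.mem_range.mpr hj, hni⟩
      rw [hj₀] at this
      exact hjj₀ (Finset.mem_singleton.mp this)
    obtain ⟨v, hv, hfv⟩ := Finset.mem_image.mp hjimg
    rw [Finset.card_eq_one]
    refine ⟨v, ?_⟩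
    ext x
    simp only [Finset.mem_filter, Finset.mem_singleton]
    constructor
    · rintro ⟨hx, hfx⟩
      exact hinj hx hv (by rw [hfx, hfv])
    · rintro rfl
      exact ⟨hv, hfv⟩

lemma gasp (Γ : SimpleGraph V) (hb : ∀ s : Finset V, s.card ≤ oms Γ s * oms Γᶜ s) :
    ∀ s : Finset V, GoodCol Γ s := by
  intro s
  induction s using Finset.strongInductionOn with
  | _ s IH =>
  by_contra hbad
  have hsne : s.Nonempty := by
    rcases s.eq_empty_or_nonempty with rfl | h
    · exact (hbad ⟨fun _ => 0, by simp, by simp⟩).elim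
    · exact h
  set ω := oms Γ s with hωdef
  set α := oms Γᶜ s with hαdef
  have hω : 1 ≤ ω := oms_nonempty_pos hsne
  have hα : 1 ≤ α := oms_nonempty_pos hsne
  -- extension lemma
  have hext : ∀ T : Finset V, T ⊆ s → T.Nonempty → clq Γᶜ T →
      ∃ K, K ⊆ s \ T ∧ clq Γ K ∧ K.card = ω := by
    intro T hTs hTne hTst
    obtain ⟨f, hf1, hf2⟩ := IH (s \ T) (Finset.sdiff_ssubset hTs hTne)
    set m := oms Γ (s \ T) with hmdef
    have hm : ω ≤ m := by
      by_contra hlt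
      push_neg at hlt
      apply hbad
      refine ⟨fun v => if v ∈ T then m else f v, ?_, ?_⟩
      · intro v hv
        by_cases hvT : v ∈ T
        · simpa [hvT] using hlt
        · have := hf1 v (Finset.mem_sdiff.mpr ⟨hv, hvT⟩)
          simp only [hvT, if_false]
          omega
      · intro u hu v hv hadj
        by_cases huT : u ∈ T <;> by_cases hvT : v ∈ T
        · exact absurd hadj ((SimpleGraph.compl_adj Γ u v).mp (hTst u huT v hvT (Γ.ne_of_adj hadj))).2
        · have := hf1 v (Finset.mem_sdiff.mpr ⟨hv, hvT⟩)
          simp only [huT, hvT, if_true, if_false]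
          omega
        · have := hf1 u (Finset.mem_sdiff.mpr ⟨hu, huT⟩)
          simp only [huT, hvT, if_true, if_false]
          omega
        · simp only [huT, hvT, if_false]
          exact hf2 u (Finset.mem_sdiff.mpr ⟨hu, huT⟩) v (Finset.mem_sdiff.mpr ⟨hv, hvT⟩) hadj
    exact exists_clique_card_eq hm
  -- the maximum stable set A
  obtain ⟨A, hAs, hAst, hAcard⟩ := exists_clique_oms Γᶜ s
  -- colorings of s minus a vertex
  have hFa : ∀ a : V, a ∈ s → ∃ f : V → ℕ, (∀ v ∈ s \ {a}, f v < ω) ∧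
      (∀ u ∈ s \ {a}, ∀ v ∈ s \ {a}, Γ.Adj u v → f u ≠ f v) := by
    intro a ha
    obtain ⟨f, hf1, hf2⟩ := IH (s \ {a})
      (Finset.sdiff_ssubset (Finset.singleton_subset_iff.mpr ha) (Finset.singleton_nonempty a))
    exact ⟨f, fun v hv => lt_of_lt_of_le (hf1 v hv) (oms_mono Finset.sdiff_subset), hf2⟩
  choose F hFlt hFprop using fun a : {x // x ∈ A} => hFa a.1 (hAs a.2)
  -- the classes
  set Tcl : {x // x ∈ A} → Fin ω → Finset V :=
    fun a j => (s \ {a.1}).filter (fun v => F a v = j.1) with hTcl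
  set ι := Option ({x // x ∈ A} × Fin ω) with hι
  set Tset : ι → Finset V := fun t => t.elim A (fun p => Tcl p.1 p.2) with hTset
  have Tsub : ∀ t, Tset t ⊆ s := by
    rintro (_ | ⟨a, j⟩)
    · exact hAs
    · intro v hv
      simp only [hTset, hTcl, Option.elim, Finset.mem_filter, Finset.mem_sdiff] at hv
      exact hv.1.1
  have Tstab : ∀ t, clq Γᶜ (Tset t) := by
    rintro (_ | ⟨a, j⟩)
    · exact hAst
    · intro u hu v hv huv
      simp only [hTset, hTcl, Option.elim, Finset.mem_filter, Finset.mem_sdiff] at hu hv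
      refine (SimpleGraph.compl_adj Γ u v).mpr ⟨huv, fun hadj => ?_⟩
      exact hFprop a u (Finset.mem_sdiff.mpr hu.1) v (Finset.mem_sdiff.mpr hv.1) hadj
        (by rw [hu.2, hv.2])
  -- injectivity of colorings on cliques
  have hinjF : ∀ (a : {x // x ∈ A}) (K : Finset V), K ⊆ s \ {a.1} → clq Γ K →
      Set.InjOn (F a) ↑K := by
    intro a K hKs hK x hx y hy hxy
    by_contra hne
    exact hFprop a x (hKs hx) y (hKs hy) (hK x hx y hy hne) hxy
  have Tne : ∀ t, (Tset t).Nonempty := by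
    rintro (_ | ⟨a, j⟩)
    · rw [hTset]
      simp only [Option.elim]
      rw [← Finset.card_pos, hAcard, ← hαdef]
      exact hα
    · obtain ⟨K, hKs, hK, hKcard⟩ := hext {a.1}
        (Finset.singleton_subset_iff.mpr (hAs a.2)) (Finset.singleton_nonempty _)
        (clq_singleton _ _)
      have h1 : (K.filter (fun v => F a v = j.1)).card = 1 :=
        color_count (hinjF a K hKs hK) (fun v hv => hFlt a v (hKs hv)) hKcard j.2
      obtain ⟨v, hv⟩ := Finset.card_eq_one.mp h1
      have hvmem : v ∈ K.filter (fun v => F a v = j.1) := hv ▸ Finset.mem_singleton_self v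
      rw [Finset.mem_filter] at hvmem
      refine ⟨v, ?_⟩
      show v ∈ (some (a, j) : ι).elim A (fun p => Tcl p.1 p.2)
      simp only [Option.elim, hTcl, Finset.mem_filter]
      exact ⟨hKs hvmem.1, hvmem.2⟩
  -- the cliques missing each stable set
  choose K Ksub Kclq Kcard using fun t : ι => hext (Tset t) (Tsub t) (Tne t) (Tstab t)
  have hzero : ∀ t, (K t ∩ Tset t).card = 0 := by
    intro t
    rw [Finset.card_eq_zero, ← Finset.disjoint_iff_inter_eq_empty]
    exact Finset.disjoint_left.mpr fun x hx => (Finset.mem_sdiff.mp (Ksub t hx)).2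
  have hKsubs : ∀ t, K t ⊆ s := fun t => (Ksub t).trans Finset.sdiff_subset
  -- count of intersections
  have hcnt1 : ∀ (u : ι) (a : {x // x ∈ A}) (j : Fin ω), a.1 ∉ K u →
      (K u ∩ Tcl a j).card = 1 := by
    intro u a j ha
    have hKsa : K u ⊆ s \ {a.1} := by
      intro v hv
      exact Finset.mem_sdiff.mpr ⟨hKsubs u hv, by
        rw [Finset.mem_singleton]; rintro rfl; exact ha hv⟩
    have heq : K u ∩ Tcl a j = (K u).filter (fun v => F a v = j.1) := by
      ext v
      simp only [hTcl, Finset.mem_inter, Finset.mem_filter, Finset.mem_sdiff]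
      constructor
      · rintro ⟨h1, _, h3⟩; exact ⟨h1, h3⟩
      · rintro ⟨h1, h2⟩; exact ⟨h1, Finset.mem_sdiff.mp (hKsa h1), h2⟩
    rw [heq]
    exact color_count (hinjF a (K u) hKsa (Kclq u)) (fun v hv => hFlt a v (hKsa hv))
      (Kcard u) j.2
  have count : ∀ t u : ι, ((K u) ∩ Tset t).card = if t = u then 0 else 1 := by
    intro t u
    rcases eq_or_ne t u with rfl | htu
    · simp [hzero]
    rw [if_neg htu]
    match u with
    | none =>
      -- K none ∩ A = ∅; t must be some
      match t with
      | none => exact absurd rfl htu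
      | some (a, j) =>
        have ha : a.1 ∉ K none := by
          intro hmem
          have h0 := hzero none
          rw [Finset.card_eq_zero] at h0
          have hmem2 : a.1 ∈ K none ∩ Tset none := by
            rw [Finset.mem_inter]
            refine ⟨hmem, ?_⟩
            show a.1 ∈ (none : ι).elim A (fun p => Tcl p.1 p.2)
            exact a.2
          rw [h0] at hmem2
          exact absurd hmem2 (Finset.notMem_empty _)
        exact hcnt1 none a j ha
    | some (a₀, j₀) =>
      -- first: a₀ ∈ K (some (a₀,j₀))
      set u := (some (a₀, j₀) : ι) with hu
      have ha₀ : a₀.1 ∈ K u := by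
        by_contra ha
        have h1 := hcnt1 u a₀ j₀ ha
        have h0 := hzero u
        have hTu : Tset u = Tcl a₀ j₀ := by rw [hu]; exact rfl
        rw [hTu] at h0
        omega
      have hsame : ∀ jx : Fin ω, jx ≠ j₀ → (K u ∩ Tcl a₀ jx).card = 1 := by
        intro jx hjj
        set K' := (K u).erase a₀.1 with hK'
        have hK'sub : K' ⊆ s \ {a₀.1} := by
          intro v hv
          rw [Finset.mem_erase] at hv
          exact Finset.mem_sdiff.mpr ⟨hKsubs u hv.2, Finset.notMem_singleton.mpr hv.1⟩
        have hK'clq : clq Γ K' := clq_mono (Finset.erase_subset _ _) (Kclq u)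
        have hK'card : K'.card + 1 = ω := by
          rw [hK', Finset.card_erase_of_mem ha₀, Kcard u]
          omega
        have hinterK' : ∀ j' : Fin ω, K u ∩ Tcl a₀ j' = K'.filter (fun v => F a₀ v = j'.1) := by
          intro j'
          ext v
          simp only [hTcl, hK', Finset.mem_inter, Finset.mem_filter, Finset.mem_sdiff,
            Finset.mem_erase, Finset.mem_singleton]
          constructor
          · rintro ⟨h1, ⟨_, h2⟩, h3⟩; exact ⟨⟨h2, h1⟩, h3⟩
          · rintro ⟨⟨h2, h1⟩, h3⟩; exact ⟨h1, ⟨hKsubs u h1, h2⟩, h3⟩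
        obtain ⟨jm, hjm, hjmempty, hjmother⟩ := color_missing
          (hinjF a₀ K' hK'sub hK'clq) (fun v hv => hFlt a₀ v (hK'sub hv)) hK'card
        have hempty₀ : K'.filter (fun v => F a₀ v = j₀.1) = ∅ := by
          rw [← hinterK' j₀, ← Finset.card_eq_zero]
          have h0 := hzero u
          have hTu : Tset u = Tcl a₀ j₀ := by rw [hu]; exact rfl
          rw [hTu] at h0
          exact h0
        have hjmj₀ : jm = j₀.1 := by
          by_contra hne'
          have h1 := hjmother j₀.1 j₀.2 (fun h => hne' h.symm)
          rw [hempty₀] at h1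
          simp at h1
        have h1 := hjmother jx.1 jx.2 (by rw [hjmj₀]; exact fun h => hjj (Fin.ext h))
        rw [hinterK' jx]
        exact h1
      match t with
      | none =>
        -- card (K u ∩ A) = 1
        have hle : (K u ∩ A).card ≤ 1 := clique_inter_stable (Kclq u) hAst
        have hge : 0 < (K u ∩ A).card :=
          Finset.card_pos.mpr ⟨a₀.1, Finset.mem_inter.mpr ⟨ha₀, a₀.2⟩⟩
        simp only [hTset, Option.elim]
        omega
      | some (a, j) =>
        rcases eq_or_ne a a₀ with heq | hne
        · have hjj : j ≠ j₀ := by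
            intro h; apply htu; rw [heq, h]
          have hTt : Tset (some (a, j)) = Tcl a j := rfl
          rw [hTt, show Tcl a j = Tcl a₀ j from by rw [heq]]
          exact hsame j hjj
        · -- different vertex a ≠ a₀: a ∉ K u
          have ha : a.1 ∉ K u := by
            intro hmem
            have h2 : 1 < (K u ∩ A).card := by
              rw [Finset.one_lt_card]
              exact ⟨a.1, Finset.mem_inter.mpr ⟨hmem, a.2⟩, a₀.1,
                Finset.mem_inter.mpr ⟨ha₀, a₀.2⟩, by
                  intro h; exact hne (Subtype.ext h)⟩
            have := clique_inter_stable (Kclq u) hAst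
            omega
          exact hcnt1 u a j ha
  -- linear independence of the indicator vectors
  have hNcard : Fintype.card ι = α * ω + 1 := by
    have h1 : Fintype.card ι = Fintype.card ({x // x ∈ A} × Fin ω) + 1 := Fintype.card_option
    rw [h1, Fintype.card_prod, Fintype.card_coe, Fintype.card_fin, hAcard, ← hαdef]
  have hlin : LinearIndependent ℚ
      (fun t : ι => (fun v : {x // x ∈ s} => if v.1 ∈ Tset t then (1 : ℚ) else 0)) := by
    rw [Fintype.linearIndependent_iff]
    intro c hc
    have hpt : ∀ v ∈ s, (∑ t : ι, c t * (if v ∈ Tset t then (1 : ℚ) else 0)) = 0 := by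
      intro v hv
      have := congrFun hc ⟨v, hv⟩
      simpa using this
    have hE : ∀ u : ι, (∑ t : ι, c t * ((K u ∩ Tset t).card : ℚ)) = 0 := by
      intro u
      have hsum : (∑ v ∈ K u, ∑ t : ι, c t * (if v ∈ Tset t then (1 : ℚ) else 0)) = 0 :=
        Finset.sum_eq_zero fun v hv => hpt v (hKsubs u hv)
      rw [Finset.sum_comm] at hsum
      rw [← hsum]
      apply Finset.sum_congr rfl
      intro t _
      rw [← Finset.mul_sum]
      congr 1
      have hfe : (K u).filter (fun v => v ∈ Tset t) = K u ∩ Tset t := by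
        ext x; simp [Finset.mem_inter, Finset.mem_filter]
      rw [Finset.sum_boole, hfe]
    have hall : ∀ u : ι, (∑ t : ι, c t) - c u = 0 := by
      intro u
      have h := hE u
      have h2 : (∑ t : ι, c t * ((K u ∩ Tset t).card : ℚ))
          = (∑ t : ι, c t) - (∑ t : ι, if t = u then c t else 0) := by
        rw [← Finset.sum_sub_distrib]
        apply Finset.sum_congr rfl
        intro t _
        rw [count t u]
        by_cases ht : t = u <;> simp [ht]
      rw [h2] at h
      rw [Finset.sum_ite_eq' Finset.univ u c] at h
      simpa using h
    have hsig : ∀ u : ι, c u = ∑ t : ι, c t := by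
      intro u; have := hall u; linarith
    have hsum0 : (∑ t : ι, c t) = 0 := by
      have h1 : (∑ t : ι, c t) = (Fintype.card ι : ℚ) * (∑ t : ι, c t) := by
        conv_lhs => rw [Finset.sum_congr rfl (fun t _ => hsig t)]
        rw [Finset.sum_const, Finset.card_univ, nsmul_eq_mul]
      have hN2 : (2 : ℕ) ≤ Fintype.card ι := by rw [hNcard]; nlinarith [hω, hα]
      have hfac : ((Fintype.card ι : ℚ) - 1) * (∑ t : ι, c t) = 0 := by linarith
      rcases mul_eq_zero.mp hfac with h | h
      · exfalso
        have : (2 : ℚ) ≤ (Fintype.card ι : ℚ) := by exact_mod_cast hN2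
        linarith
      · exact h
    intro u
    rw [hsig u, hsum0]
  have hcard := hlin.fintype_card_le_finrank
  rw [Module.finrank_pi, Fintype.card_coe, hNcard] at hcard
  have hsb := hb s
  rw [← hωdef, ← hαdef] at hsb
  rw [Nat.mul_comm ω α] at hsb
  have : α * ω + 1 ≤ α * ω := le_trans hcard hsb
  omega


lemma card_le_oms_mul (Γ : SimpleGraph V) (hcol : ∀ s : Finset V, GoodCol Γ s) :
    ∀ s : Finset V, s.card ≤ oms Γ s * oms Γᶜ s := by
  intro s
  obtain ⟨f, hf1, hf2⟩ := hcol s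
  have hcardsum : s.card = ∑ j ∈ Finset.range (oms Γ s), (s.filter (fun v => f v = j)).card :=
    Finset.card_eq_sum_card_fiberwise fun x hx => Finset.mem_range.mpr (hf1 x hx)
  rw [hcardsum]
  have hbound : ∀ j ∈ Finset.range (oms Γ s),
      (s.filter (fun v => f v = j)).card ≤ oms Γᶜ s := by
    intro j _
    apply card_le_oms (Finset.filter_subset _ _)
    intro a ha b hb hab
    rw [Finset.mem_filter] at ha hb
    refine (SimpleGraph.compl_adj Γ a b).mpr ⟨hab, fun hadj => ?_⟩
    exact hf2 a ha.1 b hb.1 hadj (by rw [ha.2, hb.2])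
  calc ∑ j ∈ Finset.range (oms Γ s), (s.filter (fun v => f v = j)).card
      ≤ ∑ _j ∈ Finset.range (oms Γ s), oms Γᶜ s := Finset.sum_le_sum hbound
    _ = oms Γ s * oms Γᶜ s := by rw [Finset.sum_const, Finset.card_range, smul_eq_mul]

/-- Weak perfect graph theorem in coloring form. -/
lemma goodcol_compl (Γ : SimpleGraph V) (hcol : ∀ s : Finset V, GoodCol Γ s) :
    ∀ s : Finset V, GoodCol Γᶜ s := by
  apply gasp
  intro s
  have h1 := card_le_oms_mul Γ hcol s
  have h2 : oms Γᶜᶜ s = oms Γ s := by rw [compl_compl]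
  rw [h2, Nat.mul_comm]
  exact h1


/-- indicator count of `v` in a list of finsets -/
noncomputable def cnt (L : List (Finset V)) (v : V) : ℕ :=
  (L.map (fun T => if v ∈ T then (1:ℕ) else 0)).sum

lemma cnt_nil (v : V) : cnt ([] : List (Finset V)) v = 0 := rfl

lemma cnt_cons (T : Finset V) (L : List (Finset V)) (v : V) :
    cnt (T :: L) v = (if v ∈ T then 1 else 0) + cnt L v := by
  simp [cnt]

lemma cnt_pos {L : List (Finset V)} {v : V} (h : 1 ≤ cnt L v) : ∃ T ∈ L, v ∈ T := by
  induction L with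
  | nil => simp [cnt_nil] at h
  | cons T L IH =>
    rw [cnt_cons] at h
    by_cases hv : v ∈ T
    · exact ⟨T, List.mem_cons_self, hv⟩
    · rw [if_neg hv] at h
      obtain ⟨T', hT', hvT'⟩ := IH (by omega)
      exact ⟨T', List.mem_cons_of_mem T hT', hvT'⟩

lemma cnt_ge_of_mem {L : List (Finset V)} {T : Finset V} {v : V} (hT : T ∈ L) (hv : v ∈ T) :
    1 ≤ cnt L v := by
  induction L with
  | nil => simp at hT
  | cons T' L IH =>
    rw [cnt_cons]
    rcases List.mem_cons.mp hT with rfl | hT'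
    · rw [if_pos hv]; omega
    · have := IH hT'; omega

lemma cnt_swap (L : List (Finset V)) (K : Finset V) :
    (L.map (fun T => (K ∩ T).card)).sum = ∑ v ∈ K, cnt L v := by
  induction L with
  | nil => simp [cnt_nil]
  | cons T L IH =>
    simp only [List.map_cons, List.sum_cons, IH]
    have hcc : ∀ v ∈ K, cnt (T :: L) v = (if v ∈ T then 1 else 0) + cnt L v :=
      fun v _ => cnt_cons T L v
    rw [Finset.sum_congr rfl hcc, Finset.sum_add_distrib]
    congr 1
    rw [show K ∩ T = K.filter (fun v => v ∈ T) from by ext x; simp, Finset.card_filter]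
  
lemma list_sum_le_length {l : List ℕ} (h : ∀ x ∈ l, x ≤ 1) : l.sum ≤ l.length := by
  induction l with
  | nil => simp
  | cons a l IH =>
    simp only [List.sum_cons, List.length_cons]
    have := h a (List.mem_cons_self)
    have := IH fun x hx => h x (List.mem_cons_of_mem a hx)
    omega

lemma list_all_one {l : List ℕ} (h1 : ∀ x ∈ l, x ≤ 1) (h2 : l.length ≤ l.sum) :
    ∀ x ∈ l, x = 1 := by
  induction l with
  | nil => simp
  | cons a l IH =>
    have ha := h1 a (List.mem_cons_self)
    have hl : ∀ x ∈ l, x ≤ 1 := fun x hx => h1 x (List.mem_cons_of_mem a hx)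
    have hsl := list_sum_le_length hl
    simp only [List.sum_cons, List.length_cons] at h2
    intro x hx
    rcases List.mem_cons.mp hx with rfl | hx'
    · omega
    · exact IH hl (by omega) x hx'

/-- The weighted clique cover theorem for hereditarily perfect graphs:
there is a list of at most `omW Γ w` stable sets covering each `v` at least `w v` times. -/
lemma cover (Γ : SimpleGraph V) (hcol : ∀ s : Finset V, GoodCol Γ s) :
    ∀ (n : ℕ) (w : V → ℕ), (∑ v, w v) ≤ n →
    ∃ L : List (Finset V), (∀ T ∈ L, clq Γᶜ T) ∧ L.length ≤ omW Γ w ∧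
      (∀ T ∈ L, ∀ v ∈ T, 1 ≤ w v) ∧ (∀ v, w v ≤ cnt L v) := by
  intro n
  induction n with
  | zero =>
    intro w hw
    have h0 : ∀ v, w v = 0 := by
      intro v
      have := Finset.single_le_sum (f := w) (fun i _ => Nat.zero_le _) (Finset.mem_univ v)
      omega
    exact ⟨[], by simp, by simp, by simp, fun v => by rw [h0 v]; exact Nat.zero_le _⟩
  | succ n IH =>
    intro w hw
    by_cases hsmall : ∀ v, w v ≤ 1
    · -- 0/1 weights: use a coloring of the support
      set s := univ.filter (fun v => w v = 1) with hs
      obtain ⟨f, hf1, hf2⟩ := hcol s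
      have homs : oms Γ s ≤ omW Γ w := by
        obtain ⟨K, hKs, hK, hKcard⟩ := exists_clique_oms Γ s
        have : ∑ i ∈ K, w i = K.card := by
          rw [Finset.card_eq_sum_ones]
          apply Finset.sum_congr rfl
          intro v hv
          have := hKs hv
          rw [hs, Finset.mem_filter] at this
          omega
        rw [← hKcard, ← this]
        exact wsum_le_omW hK
      refine ⟨(List.range (oms Γ s)).map (fun j => s.filter (fun v => f v = j)), ?_, ?_, ?_, ?_⟩
      · intro T hT
        obtain ⟨j, _, rfl⟩ := List.mem_map.mp hT
        intro a ha b hb hab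
        rw [Finset.mem_filter] at ha hb
        refine (SimpleGraph.compl_adj Γ a b).mpr ⟨hab, fun hadj => ?_⟩
        exact hf2 a ha.1 b hb.1 hadj (by rw [ha.2, hb.2])
      · rw [List.length_map, List.length_range]
        exact homs
      · intro T hT v hv
        obtain ⟨j, _, rfl⟩ := List.mem_map.mp hT
        rw [Finset.mem_filter] at hv
        have := hv.1
        rw [hs, Finset.mem_filter] at this
        omega
      · intro v
        by_cases hv : w v = 1
        · have hvs : v ∈ s := by rw [hs, Finset.mem_filter]; exact ⟨Finset.mem_univ v, hv⟩
          have hmem : s.filter (fun x => f x = f v) ∈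
              (List.range (oms Γ s)).map (fun j => s.filter (fun v => f v = j)) :=
            List.mem_map.mpr ⟨f v, List.mem_range.mpr (hf1 v hvs), rfl⟩
          have := cnt_ge_of_mem hmem (Finset.mem_filter.mpr ⟨hvs, rfl⟩)
          omega
        · have : w v = 0 := by have := hsmall v; omega
          rw [this]; exact Nat.zero_le _
    · -- some weight at least 2
      push_neg at hsmall
      obtain ⟨v₀, hv₀'⟩ := hsmall
      have hv₀ : 2 ≤ w v₀ := hv₀'
      set wm : V → ℕ := fun v => if v = v₀ then w v₀ - 1 else w v with hwm
      have hwmle : ∀ v, wm v ≤ w v := by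
        intro v; rw [hwm]; by_cases h : v = v₀ <;> simp [h] <;> omega
      have hwmv₀ : wm v₀ = w v₀ - 1 := by rw [hwm]; simp
      have hwmne : ∀ v, v ≠ v₀ → wm v = w v := by
        intro v h; rw [hwm]; simp [h]
      have hsum : ∑ v, wm v + 1 = ∑ v, w v := by
        rw [← Finset.sum_erase_add univ wm (Finset.mem_univ v₀),
          ← Finset.sum_erase_add univ w (Finset.mem_univ v₀)]
        have : ∑ v ∈ univ.erase v₀, wm v = ∑ v ∈ univ.erase v₀, w v := by
          apply Finset.sum_congr rfl
          intro v hv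
          exact hwmne v (Finset.ne_of_mem_erase hv)
        rw [this, hwmv₀]
        omega
      have hsumle : ∑ v, wm v ≤ n := by omega
      obtain ⟨Lm, hLmst, hLmlen, hLmsupp, hLmcov⟩ := IH wm hsumle
      set t := omW Γ w with ht
      have htge : 2 ≤ t := by
        have h1 : ∑ i ∈ ({v₀} : Finset V), w i ≤ t := wsum_le_omW (clq_singleton Γ v₀)
        rw [Finset.sum_singleton] at h1
        omega
      have hwmlet : omW Γ wm ≤ t := omW_mono hwmle
      by_cases hdrop : omW Γ wm ≤ t - 1
      · -- add the singleton {v₀}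
        refine ⟨{v₀} :: Lm, ?_, ?_, ?_, ?_⟩
        · intro T hT
          rcases List.mem_cons.mp hT with rfl | hT'
          · exact clq_singleton Γᶜ v₀
          · exact hLmst T hT'
        · simp only [List.length_cons]
          omega
        · intro T hT v hv
          rcases List.mem_cons.mp hT with rfl | hT'
          · rw [Finset.mem_singleton] at hv
            subst hv; omega
          · exact le_trans (hLmsupp T hT' v hv) (hwmle v)
        · intro v
          rw [cnt_cons]
          by_cases h : v = v₀
          · rw [h, if_pos (Finset.mem_singleton_self v₀)]
            have hc := hLmcov v₀
            rw [hwmv₀] at hc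
            omega
          · have := hLmcov v
            rw [hwmne v h] at this
            omega
      · -- no drop: omW wm = t
        have homw : omW Γ wm = t := by omega
        -- v₀ is covered by some T in Lm
        have hcv₀ : 1 ≤ cnt Lm v₀ := le_trans (by rw [hwmv₀]; omega) (hLmcov v₀)
        obtain ⟨T, hTLm, hv₀T⟩ := cnt_pos hcv₀
        -- every maximum wm-weight clique meets every member of Lm exactly once
        have hhit : ∀ K : Finset V, clq Γ K → ∑ i ∈ K, wm i = t →
            ∀ T' ∈ Lm, (K ∩ T').card = 1 := by
          intro K hK hKt T' hT'
          have hterm : ∀ x ∈ Lm.map (fun T' => (K ∩ T').card), x ≤ 1 := by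
            intro x hx
            obtain ⟨T'', hT'', rfl⟩ := List.mem_map.mp hx
            exact clique_inter_stable hK (hLmst T'' hT'')
          have hsumge : t ≤ (Lm.map (fun T' => (K ∩ T').card)).sum := by
            rw [cnt_swap, ← hKt]
            apply Finset.sum_le_sum
            intro i _
            exact hLmcov i
          have hlen : (Lm.map (fun T' => (K ∩ T').card)).length ≤
              (Lm.map (fun T' => (K ∩ T').card)).sum := by
            rw [List.length_map]
            omega
          exact list_all_one hterm hlen _ (List.mem_map.mpr ⟨T', hT', rfl⟩)
        -- v₀ lies in no maximum w-weight clique among wm-max cliques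
        have hv₀notin : ∀ K : Finset V, clq Γ K → ∑ i ∈ K, wm i = t → v₀ ∉ K := by
          intro K hK hKt hmem
          have h1 : ∑ i ∈ K, w i ≤ t := wsum_le_omW hK
          have h2 : ∑ i ∈ K, w i = ∑ i ∈ K, wm i + 1 := by
            rw [← Finset.sum_erase_add K wm hmem, ← Finset.sum_erase_add K w hmem]
            have : ∑ v ∈ K.erase v₀, wm v = ∑ v ∈ K.erase v₀, w v :=
              Finset.sum_congr rfl fun v hv => hwmne v (Finset.ne_of_mem_erase hv)
            rw [this, hwmv₀]
            omega
          omega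
        -- T is not just {v₀}
        have hTbig : ∃ x ∈ T, x ≠ v₀ ∧ 1 ≤ wm x := by
          obtain ⟨K', hK', hK't⟩ := exists_clique_omW Γ wm
          rw [homw] at hK't
          have h1 := hhit K' hK' hK't T hTLm
          obtain ⟨x, hx⟩ := Finset.card_eq_one.mp h1
          have hxmem : x ∈ K' ∩ T := by rw [hx]; exact Finset.mem_singleton_self x
          rw [Finset.mem_inter] at hxmem
          have hxv₀ : x ≠ v₀ := by
            rintro rfl
            exact hv₀notin K' hK' hK't hxmem.1
          exact ⟨x, hxmem.2, hxv₀, hLmsupp T hTLm x hxmem.2⟩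
        -- reduced weight
        set u : V → ℕ := fun x => if x ∈ T.erase v₀ then wm x - 1 else wm x with hu
        have hule : ∀ v, u v ≤ wm v := by
          intro v; rw [hu]; by_cases h : v ∈ T.erase v₀ <;> simp [h]
        have huv₀ : u v₀ = wm v₀ := by
          rw [hu]; simp
        have huerase : ∀ v ∈ T.erase v₀, u v = wm v - 1 := by
          intro v hv; rw [hu]; simp [hv]
        have hunotin : ∀ v, v ∉ T.erase v₀ → u v = wm v := by
          intro v hv; rw [hu]; simp [hv]
        have husum : ∑ v, u v < ∑ v, wm v := by
          obtain ⟨x, hxT, hxv₀, hx1⟩ := hTbig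
          have hxmem : x ∈ T.erase v₀ := Finset.mem_erase.mpr ⟨hxv₀, hxT⟩
          apply Finset.sum_lt_sum (fun i _ => hule i)
          refine ⟨x, Finset.mem_univ x, ?_⟩
          rw [huerase x hxmem]
          omega
        have huomw : omW Γ u ≤ t - 1 := by
          apply Finset.sup_le
          intro K hK
          simp only [Finset.mem_filter, Finset.mem_powerset] at hK
          by_cases hcase : ∑ i ∈ K, wm i = t
          · have h1 := hhit K hK.2 hcase T hTLm
            obtain ⟨x, hx⟩ := Finset.card_eq_one.mp h1
            have hxmem : x ∈ K ∩ T := by rw [hx]; exact Finset.mem_singleton_self x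
            rw [Finset.mem_inter] at hxmem
            have hxv₀ : x ≠ v₀ := by
              rintro rfl
              exact hv₀notin K hK.2 hcase hxmem.1
            have hxerase : x ∈ T.erase v₀ := Finset.mem_erase.mpr ⟨hxv₀, hxmem.2⟩
            have hx1 : 1 ≤ wm x := hLmsupp T hTLm x hxmem.2
            have : ∑ i ∈ K, u i + 1 ≤ ∑ i ∈ K, wm i := by
              rw [← Finset.sum_erase_add K u hxmem.1, ← Finset.sum_erase_add K wm hxmem.1]
              have hle : ∑ v ∈ K.erase x, u v ≤ ∑ v ∈ K.erase x, wm v :=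
                Finset.sum_le_sum fun v _ => hule v
              rw [huerase x hxerase]
              omega
            omega
          · have h1 : ∑ i ∈ K, wm i ≤ t := by rw [← homw]; exact wsum_le_omW hK.2
            have h2 : ∑ i ∈ K, u i ≤ ∑ i ∈ K, wm i := Finset.sum_le_sum fun v _ => hule v
            omega
        obtain ⟨Lu, hLust, hLulen, hLusupp, hLucov⟩ := IH u (by omega)
        refine ⟨T :: Lu, ?_, ?_, ?_, ?_⟩
        · intro T' hT'
          rcases List.mem_cons.mp hT' with rfl | hT''
          · exact hLmst T' hTLm
          · exact hLust T' hT''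
        · simp only [List.length_cons]
          omega
        · intro T' hT' v hv
          rcases List.mem_cons.mp hT' with rfl | hT''
          · exact le_trans (hLmsupp T' hTLm v hv) (hwmle v)
          · exact le_trans (hLusupp T' hT'' v hv) (le_trans (hule v) (hwmle v))
        · intro v
          rw [cnt_cons]
          have hcu := hLucov v
          by_cases h : v = v₀
          · subst h
            rw [if_pos hv₀T]
            rw [huv₀, hwmv₀] at hcu
            omega
          · by_cases hvT : v ∈ T
            · have hverase : v ∈ T.erase v₀ := Finset.mem_erase.mpr ⟨h, hvT⟩
              rw [if_pos hvT]
              rw [huerase v hverase] at hcu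
              have hw1 : 1 ≤ wm v := hLmsupp T hTLm v hvT
              rw [← hwmne v h]
              omega
            · rw [if_neg hvT]
              have : v ∉ T.erase v₀ := fun hc => hvT (Finset.mem_of_mem_erase hc)
              rw [hunotin v this] at hcu
              rw [← hwmne v h]
              omega

/-- Cauchy-Schwarz for the complex dot product. -/
lemma cs_dot {d : ℕ} (a b : Fin d → ℂ) :
    ‖star a ⬝ᵥ b‖ ^ 2 ≤ (star a ⬝ᵥ a).re * (star b ⬝ᵥ b).re := by
  set a' := (WithLp.equiv 2 (Fin d → ℂ)).symm a with ha'
  set b' := (WithLp.equiv 2 (Fin d → ℂ)).symm b with hb'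
  have hab : inner ℂ a' b' = star a ⬝ᵥ b := by rw [dotProduct_comm]; rfl
  have haa : inner ℂ a' a' = star a ⬝ᵥ a := by rw [dotProduct_comm]; rfl
  have hbb : inner ℂ b' b' = star b ⬝ᵥ b := by rw [dotProduct_comm]; rfl
  have h := norm_inner_le_norm (𝕜 := ℂ) a' b'
  rw [hab] at h
  have ha := inner_self_eq_norm_sq (𝕜 := ℂ) a'
  rw [haa] at ha
  have hb := inner_self_eq_norm_sq (𝕜 := ℂ) b'
  rw [hbb] at hb
  simp only [RCLike.re_to_complex] at ha hb
  rw [ha, hb]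
  nlinarith [norm_nonneg a', norm_nonneg b', norm_nonneg (star a ⬝ᵥ b)]

/-- linearity of the quadratic form over a finset sum -/
lemma qform_sum {d : ℕ} {ι : Type*} (s : Finset ι) (A : ι → Matrix (Fin d) (Fin d) ℂ)
    (ψ : Fin d → ℂ) :
    star ψ ⬝ᵥ ((∑ i ∈ s, A i) *ᵥ ψ) = ∑ i ∈ s, star ψ ⬝ᵥ (A i *ᵥ ψ) := by
  classical
  induction s using Finset.induction_on with
  | empty => simp [Matrix.zero_mulVec]
  | @insert _ _ hx ih =>
    rw [Finset.sum_insert hx, Finset.sum_insert hx, Matrix.add_mulVec,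
      dotProduct_add, ih]

/-- The clique constraint: for a unit vector the squared expectations over a clique sum
to at most 1. -/
lemma clique_bound {G : SimpleGraph V} {d : ℕ} {S : V → Matrix (Fin d) (Fin d) ℂ}
    (hherm : ∀ i, (S i).IsHermitian) (hsq : ∀ i, S i * S i = 1)
    (hanti : ∀ i j, G.Adj i j → S i * S j = -(S j * S i))
    {ψ : Fin d → ℂ} (hψ : star ψ ⬝ᵥ ψ = 1)
    {K : Finset V} (hK : clq G K) :
    ∑ i ∈ K, (expectation (S i) ψ) ^ 2 ≤ 1 := by
  classical
  set x : V → ℝ := fun i => expectation (S i) ψ with hx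
  set T : Matrix (Fin d) (Fin d) ℂ := ∑ i ∈ K, ((x i : ℂ) • S i) with hT
  set sval : ℝ := ∑ i ∈ K, (x i) ^ 2 with hsval
  have hsval0 : 0 ≤ sval := Finset.sum_nonneg fun i _ => sq_nonneg _
  -- T is Hermitian
  have hTherm : Tᴴ = T := by
    rw [hT, Matrix.conjTranspose_sum]
    apply Finset.sum_congr rfl
    intro i _
    rw [Matrix.conjTranspose_smul, (hherm i).eq]
    congr 1
    exact Complex.conj_ofReal _
  -- T * T = sval • 1
  have hTT : T * T = (sval : ℂ) • 1 := by
    have hf : T * T = ∑ i ∈ K, ∑ j ∈ K, ((x i : ℂ) * (x j : ℂ)) • (S i * S j) := by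
      rw [hT, Finset.sum_mul_sum]
      apply Finset.sum_congr rfl
      intro i _
      apply Finset.sum_congr rfl
      intro j _
      rw [smul_mul_assoc, mul_smul_comm, smul_smul]
    set f : V → V → Matrix (Fin d) (Fin d) ℂ :=
      fun i j => ((x i : ℂ) * (x j : ℂ)) • (S i * S j) with hfdef
    have hanti' : ∀ i ∈ K, ∀ j ∈ K, i ≠ j → f i j + f j i = 0 := by
      intro i hi j hj hij
      rw [hfdef]
      simp only
      rw [hanti i j (hK i hi j hj hij), mul_comm ((x i : ℂ)) ((x j : ℂ))]
      rw [smul_neg, neg_add_cancel]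
    have hdiag : ∀ i ∈ K, f i i = (((x i) ^ 2 : ℝ) : ℂ) • (1 : Matrix (Fin d) (Fin d) ℂ) := by
      intro i _
      rw [hfdef]
      simp only
      rw [hsq i]
      congr 1
      push_cast
      ring
    have hswap : (∑ i ∈ K, ∑ j ∈ K, f i j) = ∑ i ∈ K, ∑ j ∈ K, f j i := Finset.sum_comm
    have hDD : (∑ i ∈ K, ∑ j ∈ K, f i j) + (∑ i ∈ K, ∑ j ∈ K, f j i)
        = ∑ i ∈ K, ∑ j ∈ K, (f i j + f j i) := by
      rw [← Finset.sum_add_distrib]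
      apply Finset.sum_congr rfl
      intro i _
      rw [← Finset.sum_add_distrib]
    have hgsum : (∑ i ∈ K, ∑ j ∈ K, (f i j + f j i)) = ∑ i ∈ K, (f i i + f i i) := by
      apply Finset.sum_congr rfl
      intro i hi
      have : ∀ j ∈ K, f i j + f j i = if j = i then f i i + f i i else 0 := by
        intro j hj
        rcases eq_or_ne j i with rfl | hji
        · rw [if_pos rfl]
        · rw [if_neg hji]
          exact hanti' i hi j hj (Ne.symm hji)
      rw [Finset.sum_congr rfl this, Finset.sum_ite_eq' K i (fun _ => f i i + f i i), if_pos hi]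
    have hD : (∑ i ∈ K, ∑ j ∈ K, f i j) = ∑ i ∈ K, f i i := by
      have h2D : (2 : ℂ) • (∑ i ∈ K, ∑ j ∈ K, f i j) = (2 : ℂ) • (∑ i ∈ K, f i i) := by
        rw [two_smul, two_smul]
        calc (∑ i ∈ K, ∑ j ∈ K, f i j) + (∑ i ∈ K, ∑ j ∈ K, f i j)
            = (∑ i ∈ K, ∑ j ∈ K, f i j) + (∑ i ∈ K, ∑ j ∈ K, f j i) := by rw [← hswap]
          _ = ∑ i ∈ K, (f i i + f i i) := by rw [hDD, hgsum]
          _ = (∑ i ∈ K, f i i) + (∑ i ∈ K, f i i) := Finset.sum_add_distrib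
      exact smul_right_injective _ two_ne_zero h2D
    rw [hf, hD, Finset.sum_congr rfl hdiag, ← Finset.sum_smul]
    congr 1
    rw [hsval]
    push_cast
    ring
  -- the quadratic form of T
  have hTψ : star ψ ⬝ᵥ (T *ᵥ ψ) = ∑ i ∈ K, (x i : ℂ) * (star ψ ⬝ᵥ (S i *ᵥ ψ)) := by
    rw [hT, qform_sum]
    apply Finset.sum_congr rfl
    intro i _
    rw [Matrix.smul_mulVec, dotProduct_smul, smul_eq_mul]
  have hre : (star ψ ⬝ᵥ (T *ᵥ ψ)).re = sval := by
    rw [hTψ, Complex.re_sum, hsval]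
    apply Finset.sum_congr rfl
    intro i _
    rw [Complex.re_ofReal_mul]
    have : (star ψ ⬝ᵥ (S i *ᵥ ψ)).re = x i := rfl
    rw [this]
    ring
  have hT2 : star (T *ᵥ ψ) ⬝ᵥ (T *ᵥ ψ) = (sval : ℂ) := by
    rw [Matrix.star_mulVec, Matrix.dotProduct_mulVec, Matrix.vecMul_vecMul, hTherm, hTT]
    rw [← Matrix.dotProduct_mulVec, Matrix.smul_mulVec, Matrix.one_mulVec,
      dotProduct_smul, hψ, smul_eq_mul, mul_one]
  have h1 : sval ≤ ‖star ψ ⬝ᵥ (T *ᵥ ψ)‖ := by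
    rw [← hre]
    exact Complex.re_le_norm _
  have h2 := cs_dot ψ (T *ᵥ ψ)
  rw [hψ, hT2] at h2
  simp only [Complex.one_re, Complex.ofReal_re, one_mul] at h2
  have h3 : sval ^ 2 ≤ ‖star ψ ⬝ᵥ (T *ᵥ ψ)‖ ^ 2 := by nlinarith [h1, hsval0]
  have h4 : sval ^ 2 ≤ sval := le_trans h3 h2
  nlinarith [h4, hsval0]


lemma exists_joint_eigen {G : SimpleGraph V} {d : ℕ} (hd : 1 ≤ d)
    {S : V → Matrix (Fin d) (Fin d) ℂ} (hsq : ∀ i, S i * S i = 1)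
    (hcomm : ∀ i j, i ≠ j → ¬G.Adj i j → S i * S j = S j * S i)
    (I : Finset V) (hI : IsIndepSet G I) :
    ∃ ψ : Fin d → ℂ, ψ ≠ 0 ∧ ∀ i ∈ I, S i *ᵥ ψ = ψ ∨ S i *ᵥ ψ = -ψ := by
  classical
  induction I using Finset.induction_on with
  | empty =>
    refine ⟨Pi.single ⟨0, hd⟩ 1, ?_, by simp⟩
    intro h
    have := congrFun h ⟨0, hd⟩
    simp [Pi.single_eq_same] at this
  | @insert j I hj ih =>
    have hI' : IsIndepSet G I := fun a ha b hb =>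
      hI a (Finset.mem_insert_of_mem ha) b (Finset.mem_insert_of_mem hb)
    obtain ⟨ψ, hψ0, hψ⟩ := ih hI'
    have hcj : ∀ i ∈ I, S i * S j = S j * S i := by
      intro i hiI
      exact hcomm i j (fun h => hj (h ▸ hiI))
        (hI i (Finset.mem_insert_of_mem hiI) j (Finset.mem_insert_self j I))
    by_cases hφ : ψ + S j *ᵥ ψ = 0
    · refine ⟨ψ, hψ0, ?_⟩
      intro i hi
      rcases Finset.mem_insert.mp hi with rfl | hiI
      · right
        exact eq_neg_of_add_eq_zero_right hφ
      · exact hψ i hiI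
    · refine ⟨ψ + S j *ᵥ ψ, hφ, ?_⟩
      intro i hi
      rcases Finset.mem_insert.mp hi with rfl | hiI
      · left
        rw [Matrix.mulVec_add, Matrix.mulVec_mulVec, hsq i, Matrix.one_mulVec, add_comm]
      · rcases hψ i hiI with h | h
        · left
          rw [Matrix.mulVec_add, h, Matrix.mulVec_mulVec, hcj i hiI,
            ← Matrix.mulVec_mulVec, h]
        · right
          rw [Matrix.mulVec_add, h, Matrix.mulVec_mulVec, hcj i hiI,
            ← Matrix.mulVec_mulVec, h, Matrix.mulVec_neg, neg_add]

lemma exists_unit_joint {G : SimpleGraph V} {d : ℕ} (hd : 1 ≤ d)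
    {S : V → Matrix (Fin d) (Fin d) ℂ} (hsq : ∀ i, S i * S i = 1)
    (hcomm : ∀ i j, i ≠ j → ¬G.Adj i j → S i * S j = S j * S i)
    (I : Finset V) (hI : IsIndepSet G I) :
    ∃ ψ : Fin d → ℂ, star ψ ⬝ᵥ ψ = 1 ∧ ∀ i ∈ I, (expectation (S i) ψ) ^ 2 = 1 := by
  obtain ⟨ψ, hψ0, hψ⟩ := exists_joint_eigen hd hsq hcomm I hI
  set n : ℝ := ∑ i, Complex.normSq (ψ i) with hn
  have hdot : star ψ ⬝ᵥ ψ = (n : ℂ) := by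
    rw [hn]
    push_cast
    apply Finset.sum_congr rfl
    intro i _
    rw [Pi.star_apply, RCLike.star_def, mul_comm]
    exact Complex.mul_conj _
  have hnpos : 0 < n := by
    rw [hn]
    obtain ⟨i, hi⟩ := Function.ne_iff.mp hψ0
    apply Finset.sum_pos' (fun i _ => Complex.normSq_nonneg _)
    exact ⟨i, Finset.mem_univ i, Complex.normSq_pos.mpr hi⟩
  set c : ℝ := (Real.sqrt n)⁻¹ with hc
  have hsq' : Real.sqrt n ≠ 0 := by positivity
  set φ : Fin d → ℂ := (c : ℂ) • ψ with hφ
  have hstarφ : star φ = (c : ℂ) • star ψ := by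
    rw [hφ, star_smul, RCLike.star_def, Complex.conj_ofReal]
  have hunit : star φ ⬝ᵥ φ = 1 := by
    rw [hφ, hstarφ, smul_dotProduct, dotProduct_smul, hdot]
    rw [smul_eq_mul, smul_eq_mul]
    have h2 : Real.sqrt n * Real.sqrt n = n := Real.mul_self_sqrt hnpos.le
    have hcn : c * (c * n) = 1 := by
      rw [hc]
      field_simp
      nlinarith [h2]
    exact_mod_cast hcn
  refine ⟨φ, hunit, ?_⟩
  intro i hi
  rcases hψ i hi with h | h
  · have hSφ : S i *ᵥ φ = φ := by
      rw [hφ, Matrix.mulVec_smul, h]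
    rw [expectation, hSφ, hunit]
    norm_num
  · have hSφ : S i *ᵥ φ = -φ := by
      rw [hφ, Matrix.mulVec_smul, h, smul_neg]
    rw [expectation, hSφ, dotProduct_neg, hunit]
    norm_num


end HbarAux
namespace HbarAux
open Finset Matrix
set_option linter.unusedSectionVars false
set_option maxHeartbeats 1000000
attribute [local instance] Classical.propDecidable
variable {V : Type*} [Fintype V]

lemma indep_iff_clq_compl {G : SimpleGraph V} {K : Finset V} :
    IsIndepSet G K ↔ clq Gᶜ K := by
  constructor
  · intro h a ha b hb hab
    exact (SimpleGraph.compl_adj G a b).mpr ⟨hab, h a ha b hb⟩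
  · intro h a ha b hb
    rcases eq_or_ne a b with rfl | hab
    · exact G.irrefl
    · exact ((SimpleGraph.compl_adj G a b).mp (h a ha b hb hab)).2

lemma indep_empty (G : SimpleGraph V) : IsIndepSet G (∅ : Finset V) := by
  intro a ha
  simp at ha

noncomputable def indepSets (G : SimpleGraph V) : Finset (Finset V) :=
  univ.powerset.filter (fun I => IsIndepSet G I)

lemma indepSets_nonempty (G : SimpleGraph V) : (indepSets G).Nonempty :=
  ⟨∅, by simp only [indepSets, mem_filter, mem_powerset]; exact ⟨empty_subset _, indep_empty G⟩⟩

noncomputable def alphaMax (G : SimpleGraph V) (w : V → ℝ) : ℝ :=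
  (indepSets G).sup' (indepSets_nonempty G) (fun I => ∑ i ∈ I, w i)

lemma sum_le_alphaMax {G : SimpleGraph V} {w : V → ℝ} {I : Finset V} (h : IsIndepSet G I) :
    ∑ i ∈ I, w i ≤ alphaMax G w :=
  Finset.le_sup' (f := fun I => ∑ i ∈ I, w i) (by
    simp only [indepSets, mem_filter, mem_powerset]
    exact ⟨subset_univ I, h⟩)

lemma exists_alphaMax (G : SimpleGraph V) (w : V → ℝ) :
    ∃ I, IsIndepSet G I ∧ alphaMax G w = ∑ i ∈ I, w i := by
  obtain ⟨I, hI, hval⟩ := Finset.exists_mem_eq_sup' (indepSets_nonempty G)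
    (fun I => ∑ i ∈ I, w i)
  rw [indepSets, mem_filter] at hI
  exact ⟨I, hI.2, hval⟩

lemma cnt_mul_sum (y : V → ℝ) (L : List (Finset V)) :
    ∑ i, (cnt L i : ℝ) * y i = (L.map (fun T => ∑ i ∈ T, y i)).sum := by
  induction L with
  | nil => simp [cnt_nil]
  | cons T L IH =>
    simp only [List.map_cons, List.sum_cons, ← IH]
    have hterm : ∀ i : V, ((cnt (T :: L) i : ℝ)) * y i
        = (if i ∈ T then y i else 0) + (cnt L i : ℝ) * y i := by
      intro i
      rw [cnt_cons]
      push_cast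
      by_cases h : i ∈ T <;> simp [h] <;> ring
    rw [Finset.sum_congr rfl (fun i _ => hterm i), Finset.sum_add_distrib]
    congr 1
    rw [← Finset.sum_filter]
    congr 1
    ext x; simp

lemma list_sum_le_length_real {L : List (Finset V)} {y : V → ℝ}
    (h : ∀ T ∈ L, ∑ i ∈ T, y i ≤ 1) :
    (L.map (fun T => ∑ i ∈ T, y i)).sum ≤ (L.length : ℝ) := by
  induction L with
  | nil => simp
  | cons T L IH =>
    simp only [List.map_cons, List.sum_cons, List.length_cons]
    have h1 := h T (List.mem_cons_self)
    have h2 := IH (fun T' hT' => h T' (List.mem_cons_of_mem T hT'))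
    push_cast
    linarith

lemma nat_weight_bound {G : SimpleGraph V} (hcolc : ∀ s : Finset V, GoodCol Gᶜ s)
    {y : V → ℝ} (hy0 : ∀ i, 0 ≤ y i) (hcl : ∀ K : Finset V, clq G K → ∑ i ∈ K, y i ≤ 1)
    (m : V → ℕ) :
    ∑ i, (m i : ℝ) * y i ≤ (omW Gᶜ m : ℝ) := by
  obtain ⟨L, hst, hlen, _, hcov⟩ := cover Gᶜ hcolc (∑ v, m v) m le_rfl
  have hclG : ∀ T ∈ L, clq G T := by
    intro T hT
    have h := hst T hT
    rwa [compl_compl] at h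
  calc ∑ i, (m i : ℝ) * y i ≤ ∑ i, (cnt L i : ℝ) * y i := by
        apply Finset.sum_le_sum
        intro i _
        exact mul_le_mul_of_nonneg_right (by exact_mod_cast hcov i) (hy0 i)
    _ = (L.map (fun T => ∑ i ∈ T, y i)).sum := cnt_mul_sum y L
    _ ≤ (L.length : ℝ) := list_sum_le_length_real (fun T hT => hcl T (hclG T hT))
    _ ≤ (omW Gᶜ m : ℝ) := by exact_mod_cast hlen

lemma key_ineq {G : SimpleGraph V} (hcolc : ∀ s : Finset V, GoodCol Gᶜ s)
    {y : V → ℝ} (hy0 : ∀ i, 0 ≤ y i) (hcl : ∀ K : Finset V, clq G K → ∑ i ∈ K, y i ≤ 1)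
    {w : V → ℝ} (hw : ∀ i, 0 ≤ w i) :
    ∑ i, w i * y i ≤ alphaMax G w := by
  have hMstep : ∀ M : ℕ, 0 < M →
      ∑ i, w i * y i ≤ alphaMax G w + (Fintype.card V : ℝ) / M := by
    intro M hM
    set m : V → ℕ := fun i => ⌈w i * M⌉₊ with hm
    have hMpos : (0:ℝ) < M := by exact_mod_cast hM
    have h1 : ∑ i, w i * y i ≤ (1 / M) * ∑ i, (m i : ℝ) * y i := by
      rw [Finset.mul_sum]
      apply Finset.sum_le_sum
      intro i _
      have hle : w i * M ≤ (m i : ℝ) := Nat.le_ceil _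
      have hy := hy0 i
      rw [← mul_assoc]
      apply mul_le_mul_of_nonneg_right _ hy
      rw [one_div, inv_mul_eq_div, le_div_iff₀ hMpos]
      linarith
    have h2 : (∑ i, (m i : ℝ) * y i) ≤ (omW Gᶜ m : ℝ) := nat_weight_bound hcolc hy0 hcl m
    have h3 : (omW Gᶜ m : ℝ) ≤ M * alphaMax G w + Fintype.card V := by
      obtain ⟨K, hK, hKval⟩ := exists_clique_omW Gᶜ m
      rw [← hKval]
      have hKle : ∑ i ∈ K, ((m i : ℝ)) ≤ ∑ i ∈ K, (w i * M + 1) := by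
        apply Finset.sum_le_sum
        intro i _
        have h4 : (m i : ℝ) < w i * M + 1 :=
          Nat.ceil_lt_add_one (mul_nonneg (hw i) hMpos.le)
        linarith
      have hKsum : ∑ i ∈ K, w i ≤ alphaMax G w := sum_le_alphaMax (indep_iff_clq_compl.mpr hK)
      have hKcard : (K.card : ℝ) ≤ (Fintype.card V : ℝ) := by
        exact_mod_cast (Finset.card_le_univ K).trans_eq Finset.card_univ
      have hcast : ((∑ i ∈ K, m i : ℕ) : ℝ) = ∑ i ∈ K, ((m i : ℝ)) := by push_cast; rfl
      rw [hcast]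
      have hexp : ∑ i ∈ K, (w i * M + 1) = M * (∑ i ∈ K, w i) + (K.card : ℝ) := by
        rw [Finset.sum_add_distrib, Finset.sum_const, nsmul_eq_mul, mul_one, Finset.mul_sum]
        congr 1
        exact Finset.sum_congr rfl fun i _ => by ring
      have := mul_le_mul_of_nonneg_left hKsum hMpos.le
      calc ∑ i ∈ K, ((m i:ℝ)) ≤ ∑ i ∈ K, (w i * M + 1) := hKle
        _ = M * (∑ i ∈ K, w i) + K.card := hexp
        _ ≤ M * alphaMax G w + Fintype.card V := by linarith
    calc ∑ i, w i * y i ≤ (1/M) * ∑ i, (m i:ℝ) * y i := h1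
      _ ≤ (1/M) * (M * alphaMax G w + Fintype.card V) := by
          apply mul_le_mul_of_nonneg_left (le_trans h2 h3) (by positivity)
      _ = alphaMax G w + (Fintype.card V : ℝ) / M := by
          field_simp
  by_contra hlt
  push_neg at hlt
  set ε := ∑ i, w i * y i - alphaMax G w with hε
  have hεpos : 0 < ε := by rw [hε]; linarith
  obtain ⟨M, hM⟩ := exists_nat_gt ((Fintype.card V : ℝ) / ε)
  have hM0 : 0 < M := by
    have h0 : (0:ℝ) ≤ (Fintype.card V:ℝ)/ε := by positivity
    have : (0:ℝ) < M := lt_of_le_of_lt h0 hM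
    exact_mod_cast this
  have hMpos : (0:ℝ) < M := by exact_mod_cast hM0
  have hstep := hMstep M hM0
  have hcard : (Fintype.card V : ℝ) / M < ε := by
    rw [div_lt_iff₀ hMpos]
    rw [div_lt_iff₀ hεpos] at hM
    linarith [hM]
  rw [hε] at hcard
  linarith

/-- the interface: hereditary χ = ω gives good colorings. -/
lemma goodcol_of_perf (G : SimpleGraph V)
    (hperf : ∀ s : Set V,
      (SimpleGraph.induce s G).chromaticNumber = ((SimpleGraph.induce s G).cliqueNum : ℕ∞)) :
    ∀ s : Finset V, GoodCol G s := by
  intro s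
  set H := SimpleGraph.induce (↑s : Set V) G with hH
  have hclique : H.cliqueNum = oms G s := by
    apply le_antisymm
    · obtain ⟨t, ht⟩ := H.exists_isNClique_cliqueNum
      set K : Finset V := t.map ⟨Subtype.val, Subtype.val_injective⟩ with hKdef
      have hKs : K ⊆ s := by
        intro v hv
        rw [hKdef, Finset.mem_map] at hv
        obtain ⟨⟨v', hv'⟩, _, rfl⟩ := hv
        exact hv'
      have hKclq : clq G K := by
        intro a ha b hb hab
        rw [hKdef, Finset.mem_map] at ha hb
        obtain ⟨a', ha', rfl⟩ := ha
        obtain ⟨b', hb', rfl⟩ := hb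
        have hne : a' ≠ b' := fun h => hab (by rw [h])
        have := ht.isClique ha' hb' hne
        exact this
      have := card_le_oms hKs hKclq
      rw [hKdef, Finset.card_map] at this
      rw [← ht.card_eq]
      exact this
    · obtain ⟨K, hKs, hKclq, hKcard⟩ := exists_clique_oms G s
      set t : Finset (↑s : Set V) := K.attach.map
        ⟨fun x => ⟨x.1, hKs x.2⟩, by intro x y hxy; rw [Subtype.mk.injEq] at hxy; exact Subtype.ext hxy⟩
        with htdef
      have htclique : H.IsClique ↑t := by
        intro a ha b hb hab
        simp only [htdef, Finset.coe_map, Set.mem_image, Finset.mem_coe, Finset.mem_attach,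
          true_and] at ha hb
        obtain ⟨⟨a', ha'⟩, _, rfl⟩ := ha
        obtain ⟨⟨b', hb'⟩, _, rfl⟩ := hb
        have hne : a' ≠ b' := fun h => hab (by simp [h])
        exact hKclq a' ha' b' hb' hne
      have hcard : t.card = oms G s := by
        rw [htdef, Finset.card_map, Finset.card_attach, hKcard]
      have : t.card ≤ H.cliqueNum := SimpleGraph.IsClique.card_le_cliqueNum (tc := htclique)
      rw [hcard] at this
      exact this
  have hcolor : H.Colorable (oms G s) := by
    have h := hperf (↑s : Set V)
    rw [← hH] at h
    have hle : H.chromaticNumber ≤ (H.cliqueNum : ℕ∞) := le_of_eq h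
    rw [SimpleGraph.chromaticNumber_le_iff_colorable] at hle
    rwa [hclique] at hle
  obtain ⟨C⟩ := hcolor
  refine ⟨fun v => if h : v ∈ s then (C ⟨v, h⟩ : ℕ) else 0, ?_, ?_⟩
  · intro v hv
    dsimp only
    rw [dif_pos hv]
    exact (C ⟨v, hv⟩).2
  · intro u hu v hv hadj
    dsimp only
    rw [dif_pos hu, dif_pos hv]
    have hne : C ⟨u, hu⟩ ≠ C ⟨v, hv⟩ := by
      apply C.valid
      exact hadj
    exact fun h => hne (Fin.ext h)

end HbarAux

open Matrix in
/-- Every perfect finite simple graph is ħ-perfect. -/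
theorem stmt_1 {V : Type*} [Fintype V] (G : SimpleGraph V)
    (hperf : ∀ s : Set V,
      (SimpleGraph.induce s G).chromaticNumber = ((SimpleGraph.induce s G).cliqueNum : ℕ∞)) :
    HbarPerfect G := by
  classical
  intro d hd S hS w hw
  obtain ⟨hherm, hsq, hanti, hcomm⟩ := hS
  have hcolG : ∀ s : Finset V, HbarAux.GoodCol G s := HbarAux.goodcol_of_perf G hperf
  have hcolc : ∀ s : Finset V, HbarAux.GoodCol Gᶜ s := HbarAux.goodcol_compl G hcolG
  -- upper bound for elements of the beta set
  have hub : ∀ r ∈ {r : ℝ | ∃ ψ : Fin d → ℂ, star ψ ⬝ᵥ ψ = 1 ∧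
      r = ∑ i, w i * (expectation (S i) ψ) ^ 2}, r ≤ HbarAux.alphaMax G w := by
    rintro r ⟨ψ, hψ, rfl⟩
    apply HbarAux.key_ineq hcolc (fun i => sq_nonneg _) _ hw
    intro K hK
    exact HbarAux.clique_bound hherm hsq hanti hψ hK
  -- element of the beta set of value at least alphaMax
  obtain ⟨I, hI, hIval⟩ := HbarAux.exists_alphaMax G w
  obtain ⟨ψ, hψu, hψI⟩ := HbarAux.exists_unit_joint hd hsq hcomm I hI
  have hr₀mem : (∑ i, w i * (expectation (S i) ψ) ^ 2) ∈ {r : ℝ | ∃ ψ : Fin d → ℂ,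
      star ψ ⬝ᵥ ψ = 1 ∧ r = ∑ i, w i * (expectation (S i) ψ) ^ 2} := ⟨ψ, hψu, rfl⟩
  have hr₀ge : HbarAux.alphaMax G w ≤ ∑ i, w i * (expectation (S i) ψ) ^ 2 := by
    rw [hIval]
    have heq : ∀ i ∈ I, w i = w i * (expectation (S i) ψ) ^ 2 := by
      intro i hi
      rw [hψI i hi, mul_one]
    rw [Finset.sum_congr rfl heq]
    apply Finset.sum_le_sum_of_subset_of_nonneg (Finset.subset_univ I)
    intro i _ _
    exact mul_nonneg (hw i) (sq_nonneg _)
  have hβ : betaVal S w = HbarAux.alphaMax G w := by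
    unfold betaVal
    apply le_antisymm
    · exact csSup_le ⟨_, hr₀mem⟩ hub
    · exact le_trans hr₀ge (le_csSup ⟨HbarAux.alphaMax G w, hub⟩ hr₀mem)
  have hα : alphaW G w = HbarAux.alphaMax G w := by
    unfold alphaW
    apply le_antisymm
    · have hmem : (∑ i ∈ I, w i) ∈ {r : ℝ | ∃ J : Finset V, IsIndepSet G J ∧ r = ∑ i ∈ J, w i} :=
        ⟨I, hI, rfl⟩
      apply csSup_le ⟨_, hmem⟩
      rintro r ⟨J, hJ, rfl⟩
      exact HbarAux.sum_le_alphaMax hJ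
    · rw [hIval]
      apply le_csSup
      · refine ⟨HbarAux.alphaMax G w, ?_⟩
        rintro r ⟨J, hJ, rfl⟩
        exact HbarAux.sum_le_alphaMax hJ
      · exact ⟨I, hI, rfl⟩
  rw [hβ, hα]
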